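/- Let T be a completely non-unitary contraction on H. For λ ∈ ℂ with |λ| ≠ 1 set N_λ := W_λ ∩ A_T^⊥s, where W_λ := {(x, λx) : x ∈ H}. Then the closed linear span of the union of all N_λ over λ with |λ| < 1 and λ with |λ| > 1 equals A_T^⊥s. -/

import Mathlib

open scoped InnerProductSpace
open ContinuousLinearMap


open scoped InnerProductSpace
open ContinuousLinearMap

section Aux
variable {H : Type*} [NormedAddCommGroup H] [NormedSpace ℂ H] [CompleteSpace H]

lemma aux_summable (v : ℕ → H) (C : ℝ) (hb : ∀ n, ‖v n‖ ≤ C) {μ : ℂ} (hμ : ‖μ‖ < 1) :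
    Summable (fun n => μ ^ n • v n) := by
  apply Summable.of_norm_bounded (g := fun n => C * ‖μ‖ ^ n)
  · exact (summable_geometric_of_lt_one (norm_nonneg μ) hμ).mul_left C
  · intro n
    rw [norm_smul, norm_pow]
    calc ‖μ‖ ^ n * ‖v n‖ ≤ ‖μ‖ ^ n * C := by
          exact mul_le_mul_of_nonneg_left (hb n) (by positivity)
      _ = C * ‖μ‖ ^ n := mul_comm _ _

lemma aux_shift (v : ℕ → H) (C : ℝ) (hb : ∀ n, ‖v n‖ ≤ C) {μ : ℂ} (hμ : ‖μ‖ < 1) :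
    ∑' n, μ ^ n • v n = v 0 + μ • ∑' n, μ ^ n • v (n + 1) := by
  rw [Summable.tsum_eq_zero_add (aux_summable v C hb hμ)]
  simp only [pow_zero, one_smul]
  congr 1
  rw [← tsum_const_smul'' μ]
  congr 1; funext n
  rw [smul_smul, pow_succ, mul_comm]

lemma aux_single (x : H) {μ : ℂ} :
    ∑' n : ℕ, μ ^ n • (if n = 0 then x else 0) = x := by
  rw [tsum_eq_single 0]
  · simp
  · intro n hn; simp [hn]

lemma aux_norm_tail (v : ℕ → H) (C : ℝ) (hb : ∀ n, ‖v n‖ ≤ C) {μ : ℂ}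
    (hμ : ‖μ‖ < 1) : ‖∑' n, μ ^ n • v n‖ ≤ C / (1 - ‖μ‖) := by
  have hC : 0 ≤ C := le_trans (norm_nonneg _) (hb 0)
  have hsn : Summable (fun n => ‖μ ^ n • v n‖) := by
    apply Summable.of_nonneg_of_le (fun n => norm_nonneg _) (fun n => ?_)
      ((summable_geometric_of_lt_one (norm_nonneg μ) hμ).mul_left C)
    rw [norm_smul, norm_pow]
    calc ‖μ‖ ^ n * ‖v n‖ ≤ ‖μ‖ ^ n * C := mul_le_mul_of_nonneg_left (hb n) (by positivity)
      _ = C * ‖μ‖ ^ n := mul_comm _ _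
  calc ‖∑' n, μ ^ n • v n‖ ≤ ∑' n, ‖μ ^ n • v n‖ := norm_tsum_le_tsum_norm hsn
    _ ≤ ∑' n : ℕ, C * ‖μ‖ ^ n := by
        apply Summable.tsum_le_tsum _ hsn ((summable_geometric_of_lt_one (norm_nonneg μ) hμ).mul_left C)
        intro n
        rw [norm_smul, norm_pow]
        calc ‖μ‖ ^ n * ‖v n‖ ≤ ‖μ‖ ^ n * C := mul_le_mul_of_nonneg_left (hb n) (by positivity)
          _ = C * ‖μ‖ ^ n := mul_comm _ _
    _ = C * (1 - ‖μ‖)⁻¹ := by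
        rw [tsum_mul_left, tsum_geometric_of_lt_one (norm_nonneg μ) hμ]
    _ = C / (1 - ‖μ‖) := by rw [div_eq_mul_inv]

/-- Vanishing of a vector power series on a punctured disc forces all
coefficients to vanish. -/
lemma aux_coeffs (v : ℕ → H) (C : ℝ) (hb : ∀ n, ‖v n‖ ≤ C)
    (h : ∀ μ : ℂ, 0 < ‖μ‖ → ‖μ‖ < 1/2 → ∑' n, μ ^ n • v n = 0) :
    ∀ n, v n = 0 := by
  have hC : 0 ≤ C := le_trans (norm_nonneg _) (hb 0)
  -- step lemma
  have step : ∀ w : ℕ → H, (∀ n, ‖w n‖ ≤ C) →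
      (∀ μ : ℂ, 0 < ‖μ‖ → ‖μ‖ < 1/2 → ∑' n, μ ^ n • w n = 0) →
      w 0 = 0 ∧ (∀ μ : ℂ, 0 < ‖μ‖ → ‖μ‖ < 1/2 → ∑' n, μ ^ n • w (n + 1) = 0) := by
    intro w hwb hw
    have key : ∀ μ : ℂ, 0 < ‖μ‖ → ‖μ‖ < 1/2 →
        w 0 = - (μ • ∑' n, μ ^ n • w (n + 1)) := by
      intro μ h0 h1
      have := aux_shift w C hwb (by linarith : ‖μ‖ < 1)
      rw [hw μ h0 h1] at this
      linear_combination (norm := module) -this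
    have hw0 : w 0 = 0 := by
      by_contra hne
      have hpos : 0 < ‖w 0‖ := norm_pos_iff.mpr hne
      -- choose μ small
      set ε : ℝ := min (‖w 0‖ / (2 * C + 1) / 2) (1/4) with hε
      have hε0 : 0 < ε := by
        apply lt_min
        · positivity
        · norm_num
      have hε2 : ε < 1/2 := lt_of_le_of_lt (min_le_right _ _) (by norm_num)
      set μ : ℂ := (ε : ℂ) with hμdef
      have hμn : ‖μ‖ = ε := by
        rw [hμdef, Complex.norm_real, Real.norm_eq_abs, abs_of_pos hε0]
      have h2 := key μ (by rw [hμn]; exact hε0) (by rw [hμn]; exact hε2)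
      have htail : ‖∑' n, μ ^ n • w (n + 1)‖ ≤ C / (1 - ‖μ‖) :=
        aux_norm_tail (fun n => w (n+1)) C (fun n => hwb _) (by rw [hμn]; linarith)
      have hbound : ‖w 0‖ ≤ ε * (C / (1 - ε)) := by
        rw [h2, norm_neg, norm_smul, hμn]
        exact mul_le_mul_of_nonneg_left (by rwa [hμn] at htail) (le_of_lt hε0)
      have h1e : (1:ℝ)/2 ≤ 1 - ε := by linarith
      have hd : C / (1 - ε) ≤ 2 * C := by
        rw [div_le_iff₀ (by linarith)]
        nlinarith
      have : ‖w 0‖ ≤ ε * (2 * C) := le_trans hbound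
        (mul_le_mul_of_nonneg_left hd (le_of_lt hε0))
      have hεle : ε ≤ ‖w 0‖ / (2 * C + 1) / 2 := min_le_left _ _
      have : ‖w 0‖ ≤ ‖w 0‖ / (2 * C + 1) / 2 * (2 * C) := le_trans this
        (mul_le_mul_of_nonneg_right hεle (by linarith))
      have hq : ‖w 0‖ / (2 * C + 1) / 2 * (2 * C) < ‖w 0‖ := by
        rw [div_div]
        rw [div_mul_eq_mul_div, div_lt_iff₀ (by linarith)]
        nlinarith
      linarith
    refine ⟨hw0, fun μ h0 h1 => ?_⟩
    have := key μ h0 h1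
    rw [hw0] at this
    have hμ0 : μ ≠ 0 := by intro hc; rw [hc] at h0; simp at h0
    have := this.symm
    rw [neg_eq_zero, smul_eq_zero] at this
    rcases this with h | h
    · exact absurd h hμ0
    · exact h
  -- induction
  have main : ∀ m, (∀ μ : ℂ, 0 < ‖μ‖ → ‖μ‖ < 1/2 → ∑' n, μ ^ n • v (n + m) = 0) ∧ v m = 0 := by
    intro m
    induction m with
    | zero =>
      have h0 : ∀ μ : ℂ, 0 < ‖μ‖ → ‖μ‖ < 1/2 → ∑' n, μ ^ n • v (n + 0) = 0 := by
        simpa using h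
      exact ⟨h0, by simpa using (step (fun n => v (n + 0)) (fun n => hb _) h0).1⟩
    | succ m ih =>
      have h1 := (step (fun n => v (n + m)) (fun n => hb _) ih.1).2
      have h1' : ∀ μ : ℂ, 0 < ‖μ‖ → ‖μ‖ < 1/2 → ∑' n, μ ^ n • v (n + (m+1)) = 0 := by
        intro μ a b
        simpa [show ∀ n, n + (m+1) = n + 1 + m from fun n => by omega] using h1 μ a b
      refine ⟨h1', ?_⟩
      have := (step (fun n => v (n + (m+1))) (fun n => hb _) h1').1
      simpa using this
  intro n; exact (main n).2
end Aux

open scoped InnerProductSpace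

/-- If `A` is bounded below on a closed submodule `K`, any element of the closure of
`A '' K` is exactly `A k` for some `k ∈ K`. -/
lemma aux_lift {H : Type*} [NormedAddCommGroup H] [NormedSpace ℂ H] [CompleteSpace H]
    (K : Submodule ℂ H) (hKc : IsClosed (K : Set H)) (A : H →L[ℂ] H) (c : ℝ) (hc : 0 < c)
    (hlow : ∀ x ∈ K, c * ‖x‖ ≤ ‖A x‖) (y : H) (hy : y ∈ closure (A '' (K : Set H))) :
    ∃ k ∈ K, A k = y := by
  obtain ⟨u, hu, hul⟩ := mem_closure_iff_seq_limit.mp hy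
  choose k hkK hkA using fun n => (Set.mem_image _ _ _).mp (hu n)
  have hucauchy : CauchySeq u := hul.cauchySeq
  have hkcauchy : CauchySeq k := by
    rw [Metric.cauchySeq_iff] at hucauchy ⊢
    intro ε hε
    obtain ⟨N, hN⟩ := hucauchy (c * ε) (by positivity)
    refine ⟨N, fun m hm n hn => ?_⟩
    have h1 := hN m hm n hn
    have h2 : c * ‖k m - k n‖ ≤ ‖A (k m) - A (k n)‖ := by
      have := hlow (k m - k n) (sub_mem (hkK m) (hkK n))
      rwa [map_sub] at this
    rw [dist_eq_norm] at h1 ⊢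
    rw [← hkA m, ← hkA n] at h1
    nlinarith [norm_nonneg (k m - k n)]
  obtain ⟨l, hl⟩ := cauchySeq_tendsto_of_complete hkcauchy
  refine ⟨l, hKc.mem_of_tendsto hl (Filter.Eventually.of_forall hkK), ?_⟩
  have h3 : Filter.Tendsto (fun n => A (k n)) Filter.atTop (nhds (A l)) :=
    (A.continuous.tendsto l).comp hl
  have h4 : Filter.Tendsto (fun n => A (k n)) Filter.atTop (nhds y) := by
    simpa [funext hkA] using hul
  exact tendsto_nhds_unique h3 h4


section Aux3
variable {H : Type*} [NormedAddCommGroup H] [NormedSpace ℂ H] [CompleteSpace H]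

lemma aux_inj (A : H →L[ℂ] H) (hA : ∀ x, ‖A x‖ ≤ ‖x‖) {μ : ℂ} (hμ : ‖μ‖ < 1) {x y : H}
    (h : x - μ • A x = y - μ • A y) : x = y := by
  have h2 : (x - y) - μ • A (x - y) = 0 := by
    rw [map_sub, smul_sub]
    linear_combination (norm := module) h
  have h3 : ‖x - y‖ - ‖μ‖ * ‖A (x - y)‖ ≤ 0 := by
    calc ‖x - y‖ - ‖μ‖ * ‖A (x - y)‖ = ‖x - y‖ - ‖μ • A (x - y)‖ := by rw [norm_smul]
      _ ≤ ‖(x - y) - μ • A (x - y)‖ := norm_sub_norm_le _ _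
      _ = 0 := by rw [h2, norm_zero]
  have h4 : ‖x - y‖ = 0 := by
    by_contra h5
    have hp : 0 < ‖x - y‖ := lt_of_le_of_ne (norm_nonneg _) (Ne.symm h5)
    nlinarith [mul_le_mul_of_nonneg_left (hA (x - y)) (norm_nonneg μ)]
  exact eq_of_sub_eq_zero (norm_eq_zero.mp h4)

lemma aux_geom_bound (A : H →L[ℂ] H) (hA : ∀ x, ‖A x‖ ≤ ‖x‖) (p q : H) (cs : ℕ → H)
    (h0 : cs 0 = p) (hsucc : ∀ n, cs (n + 1) = A (cs n) + if n = 0 then q else 0) :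
    ∀ n, ‖cs n‖ ≤ ‖p‖ + ‖q‖ := by
  intro n
  induction n with
  | zero => rw [h0]; nlinarith [norm_nonneg q]
  | succ n ih =>
    rw [hsucc]
    rcases Nat.eq_zero_or_pos n with hn | hn
    · subst hn
      rw [if_pos rfl]
      calc ‖A (cs 0) + q‖ ≤ ‖A (cs 0)‖ + ‖q‖ := norm_add_le _ _
        _ ≤ ‖cs 0‖ + ‖q‖ := by linarith [hA (cs 0)]
        _ ≤ ‖p‖ + ‖q‖ := by rw [h0]
    · rw [if_neg (Nat.pos_iff_ne_zero.mp hn), add_zero]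
      exact le_trans (hA _) ih

lemma aux_geom (A : H →L[ℂ] H) (hA : ∀ x, ‖A x‖ ≤ ‖x‖) (p q : H) (cs : ℕ → H)
    (h0 : cs 0 = p) (hsucc : ∀ n, cs (n + 1) = A (cs n) + if n = 0 then q else 0)
    {μ : ℂ} (hμ : ‖μ‖ < 1) :
    (∑' n, μ ^ n • cs n) - μ • A (∑' n, μ ^ n • cs n) = p + μ • q := by
  have hbd := aux_geom_bound A hA p q cs h0 hsucc
  have hAbd : ∀ n, ‖A (cs n)‖ ≤ ‖p‖ + ‖q‖ := fun n => le_trans (hA _) (hbd n)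
  have hite : ∀ n : ℕ, ‖(if n = 0 then q else (0:H))‖ ≤ ‖q‖ := by
    intro n; split <;> simp [norm_nonneg]
  have hshift := aux_shift cs (‖p‖ + ‖q‖) hbd hμ
  have hsplit : ∑' n, μ ^ n • cs (n + 1) = A (∑' n, μ ^ n • cs n) + q := by
    have e1 : ∀ n : ℕ, μ ^ n • cs (n + 1)
        = μ ^ n • A (cs n) + μ ^ n • (if n = 0 then q else 0) := by
      intro n; rw [hsucc, smul_add]
    rw [tsum_congr e1, Summable.tsum_add (aux_summable _ _ hAbd hμ) (aux_summable _ _ hite hμ),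
      aux_single]
    congr 1
    rw [A.map_tsum (aux_summable _ _ hbd hμ)]
    exact tsum_congr fun n => by rw [map_smul]
  rw [hsplit] at hshift
  rw [h0] at hshift
  linear_combination (norm := module) hshift
end Aux3

set_option maxHeartbeats 2000000
lemma core_cnu {H : Type*} [NormedAddCommGroup H] [InnerProductSpace ℂ H] [CompleteSpace H]
    (T : H →L[ℂ] H) (hT : ‖T‖ ≤ 1)
    (hcnu : ∀ 𝒦 : Submodule ℂ H, IsClosed (𝒦 : Set H) →
      (∀ v ∈ 𝒦, T v ∈ 𝒦) → (∀ v ∈ 𝒦, ‖T v‖ = ‖v‖) →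
      T '' (𝒦 : Set H) = (𝒦 : Set H) → 𝒦 = ⊥)
    (K : Submodule ℂ H) (hK : K = LinearMap.ker ((1 - adjoint T ∘L T : H →L[ℂ] H) : H →ₗ[ℂ] H))
    (a b : H)
    (hab : ∀ x ∈ K, ⟪x, a - adjoint T b⟫_ℂ = 0)
    (hmain : ∀ μ : ℂ, ‖μ‖ < 1 ∨ 1 < ‖μ‖ →
      a + μ • b ∈ (Submodule.map (((1 : H →L[ℂ] H) - μ • T : H →L[ℂ] H) : H →ₗ[ℂ] H) K).topologicalClosure) :
    a = 0 ∧ b = 0 := by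
  have hTx : ∀ x, ‖T x‖ ≤ ‖x‖ := fun x => by
    calc ‖T x‖ ≤ ‖T‖ * ‖x‖ := T.le_opNorm x
      _ ≤ 1 * ‖x‖ := mul_le_mul_of_nonneg_right hT (norm_nonneg x)
      _ = ‖x‖ := one_mul _
  have hTsn : ‖adjoint T‖ ≤ 1 := by
    rw [show ‖adjoint T‖ = ‖T‖ from
      (ContinuousLinearMap.adjoint : (H →L[ℂ] H) ≃ₗᵢ⋆[ℂ] (H →L[ℂ] H)).norm_map T]
    exact hT
  have hTsx : ∀ x, ‖adjoint T x‖ ≤ ‖x‖ := fun x => by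
    calc ‖adjoint T x‖ ≤ ‖adjoint T‖ * ‖x‖ := (adjoint T).le_opNorm x
      _ ≤ 1 * ‖x‖ := mul_le_mul_of_nonneg_right hTsn (norm_nonneg x)
      _ = ‖x‖ := one_mul _
  have memK : ∀ x, x ∈ K ↔ adjoint T (T x) = x := by
    intro x
    rw [hK, LinearMap.mem_ker]
    have he : ((1 : H →L[ℂ] H) - adjoint T ∘L T) x = x - adjoint T (T x) := rfl
    rw [ContinuousLinearMap.coe_coe, he, sub_eq_zero, eq_comm]
  have hKclosed : IsClosed (K : Set H) := by
    rw [hK]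
    exact (ContinuousLinearMap.isClosed_ker _)
  have normK : ∀ x ∈ K, ‖T x‖ = ‖x‖ := by
    intro x hx
    have h1 : ⟪T x, T x⟫_ℂ = ⟪x, x⟫_ℂ := by
      rw [← adjoint_inner_left T x (T x), (memK x).mp hx]
    rw [inner_self_eq_norm_sq_to_K, inner_self_eq_norm_sq_to_K] at h1
    have h2 : (‖T x‖ : ℝ) ^ 2 = ‖x‖ ^ 2 := by exact_mod_cast h1
    nlinarith [norm_nonneg (T x), norm_nonneg x]
  -- membership via the defect operator
  have memK' : ∀ x, x ∈ K ↔ ((1 : H →L[ℂ] H) - adjoint T ∘L T) x = 0 := by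
    intro x; rw [hK]; exact Iff.rfl
  -- exact solvability for |μ| < 1
  have h1 : ∀ μ : ℂ, ‖μ‖ < 1 → ∃ k ∈ K, k - μ • T k = a + μ • b := by
    intro μ hμ
    have hmem := hmain μ (Or.inl hμ)
    rw [← SetLike.mem_coe, Submodule.topologicalClosure_coe, Submodule.map_coe] at hmem
    obtain ⟨k, hkK, hk⟩ := aux_lift K hKclosed ((1 : H →L[ℂ] H) - μ • T) (1 - ‖μ‖)
      (by linarith) (fun x hx => by
        simp only [ContinuousLinearMap.coe_sub', Pi.sub_apply, ContinuousLinearMap.one_apply,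
          ContinuousLinearMap.smul_apply]
        calc (1 - ‖μ‖) * ‖x‖ = ‖x‖ - ‖μ‖ * ‖x‖ := by ring
          _ = ‖x‖ - ‖μ‖ * ‖T x‖ := by rw [normK x hx]
          _ = ‖x‖ - ‖μ • T x‖ := by rw [norm_smul]
          _ ≤ ‖x - μ • T x‖ := norm_sub_norm_le _ _) _ hmem
    refine ⟨k, hkK, ?_⟩
    simpa only [ContinuousLinearMap.coe_sub', Pi.sub_apply, ContinuousLinearMap.one_apply,
      ContinuousLinearMap.smul_apply] using hk
  -- exact solvability for the reciprocal family
  have h2 : ∀ ν : ℂ, 0 < ‖ν‖ → ‖ν‖ < 1 → ∃ l ∈ K, T l - ν • l = b + ν • a := by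
    intro ν h0 h1'
    have hν : ν ≠ 0 := fun hc => by simp [hc] at h0
    have hinv : 1 < ‖ν⁻¹‖ := by
      rw [norm_inv]
      exact (one_lt_inv₀ h0).mpr h1'
    have hmem := hmain ν⁻¹ (Or.inr hinv)
    -- rewrite the submodule
    have hmapeq : Submodule.map (((1 : H →L[ℂ] H) - ν⁻¹ • T : H →L[ℂ] H) : H →ₗ[ℂ] H) K
        = Submodule.map ((T - ν • (1 : H →L[ℂ] H) : H →L[ℂ] H) : H →ₗ[ℂ] H) K := by
      apply le_antisymm
      · rintro y ⟨x, hx, rfl⟩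
        refine ⟨(-ν⁻¹) • x, K.smul_mem _ hx, ?_⟩
        simp only [ContinuousLinearMap.coe_sub', Pi.sub_apply, ContinuousLinearMap.one_apply,
          ContinuousLinearMap.smul_apply, map_smul, smul_sub, smul_smul, ContinuousLinearMap.coe_coe]
        rw [neg_mul, inv_mul_cancel₀ hν]
        module
      · rintro y ⟨x, hx, rfl⟩
        refine ⟨(-ν) • x, K.smul_mem _ hx, ?_⟩
        simp only [ContinuousLinearMap.coe_sub', Pi.sub_apply, ContinuousLinearMap.one_apply,
          ContinuousLinearMap.smul_apply, map_smul, smul_sub, smul_smul, ContinuousLinearMap.coe_coe]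
        rw [neg_mul, mul_inv_cancel₀ hν]
        module
    rw [hmapeq] at hmem
    have hmem2 : b + ν • a ∈ (Submodule.map ((T - ν • (1 : H →L[ℂ] H) : H →L[ℂ] H) : H →ₗ[ℂ] H) K).topologicalClosure := by
      have hsm := Submodule.smul_mem _ ν hmem
      have : ν • (a + ν⁻¹ • b) = b + ν • a := by
        rw [smul_add, smul_smul, mul_inv_cancel₀ hν, one_smul]
        abel
      rwa [this] at hsm
    rw [← SetLike.mem_coe, Submodule.topologicalClosure_coe, Submodule.map_coe] at hmem2
    obtain ⟨l, hlK, hl⟩ := aux_lift K hKclosed (T - ν • (1 : H →L[ℂ] H)) (1 - ‖ν‖)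
      (by linarith) (fun x hx => by
        simp only [ContinuousLinearMap.coe_sub', Pi.sub_apply,
          ContinuousLinearMap.smul_apply, ContinuousLinearMap.one_apply]
        calc (1 - ‖ν‖) * ‖x‖ = ‖x‖ - ‖ν‖ * ‖x‖ := by ring
          _ = ‖T x‖ - ‖ν • x‖ := by rw [normK x hx, norm_smul]
          _ ≤ ‖T x - ν • x‖ := norm_sub_norm_le _ _) _ hmem2
    refine ⟨l, hlK, ?_⟩
    simpa only [ContinuousLinearMap.coe_sub', Pi.sub_apply,
      ContinuousLinearMap.smul_apply, ContinuousLinearMap.one_apply] using hl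
  -- power series solution for the first family
  set R : H →L[ℂ] H := (1 : H →L[ℂ] H) - adjoint T ∘L T with hRdef
  have memKR : ∀ x, x ∈ K ↔ R x = 0 := by intro x; rw [hK]; exact Iff.rfl
  let cs : ℕ → H := fun n => Nat.rec a (fun m cm => T cm + if m = 0 then b else 0) n
  have cs0 : cs 0 = a := rfl
  have cssucc : ∀ n, cs (n + 1) = T (cs n) + if n = 0 then b else 0 := fun n => rfl
  have csbound := aux_geom_bound T hTx a b cs cs0 cssucc
  set kf : ℂ → H := fun μ => ∑' n, μ ^ n • cs n with hkfdef
  have keq : ∀ μ : ℂ, ‖μ‖ < 1 → kf μ - μ • T (kf μ) = a + μ • b :=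
    fun μ hμ => aux_geom T hTx a b cs cs0 cssucc hμ
  have kK : ∀ μ : ℂ, ‖μ‖ < 1 → kf μ ∈ K := by
    intro μ hμ
    obtain ⟨k', hk'K, hk'⟩ := h1 μ hμ
    have he : kf μ = k' := aux_inj T hTx hμ (by rw [keq μ hμ, hk'])
    rw [he]; exact hk'K
  have F1 : ∀ n, cs n ∈ K := by
    have hv := aux_coeffs (fun n => R (cs n)) (‖R‖ * (‖a‖ + ‖b‖))
      (fun n => by
        calc ‖R (cs n)‖ ≤ ‖R‖ * ‖cs n‖ := R.le_opNorm _
          _ ≤ _ := mul_le_mul_of_nonneg_left (csbound n) (norm_nonneg _))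
      (fun μ hμ0 hμ2 => by
        have hμ : ‖μ‖ < 1 := by linarith
        have e : R (kf μ) = ∑' n, μ ^ n • R (cs n) := by
          rw [hkfdef]
          rw [R.map_tsum (aux_summable cs _ csbound hμ)]
          exact tsum_congr fun n => map_smul R _ _
        rw [← e]
        exact (memKR _).mp (kK μ hμ))
    intro n
    rw [memKR]
    exact hv n
  -- power series solution for the second family
  let ds : ℕ → H := fun n =>
    Nat.rec (adjoint T b) (fun m dm => adjoint T dm + if m = 0 then adjoint T a else 0) n
  have ds0 : ds 0 = adjoint T b := rfl
  have dssucc : ∀ n, ds (n + 1) = adjoint T (ds n) + if n = 0 then adjoint T a else 0 :=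
    fun n => rfl
  have dsbound := aux_geom_bound (adjoint T) hTsx _ _ ds ds0 dssucc
  set lf : ℂ → H := fun ν => ∑' n, ν ^ n • ds n with hlfdef
  have leq : ∀ ν : ℂ, ‖ν‖ < 1 →
      lf ν - ν • adjoint T (lf ν) = adjoint T b + ν • adjoint T a :=
    fun ν hν => aux_geom (adjoint T) hTsx _ _ ds ds0 dssucc hν
  have lsolve : ∀ ν : ℂ, 0 < ‖ν‖ → ‖ν‖ < 1 →
      lf ν ∈ K ∧ T (lf ν) - ν • lf ν = b + ν • a := by
    intro ν h0 h1'
    obtain ⟨l', hl'K, hl'⟩ := h2 ν h0 h1'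
    have e0 : adjoint T (T l') = l' := (memK l').mp hl'K
    have e1 : l' - ν • adjoint T l' = adjoint T b + ν • adjoint T a := by
      have hc := congrArg (adjoint T) hl'
      rw [map_sub, map_smul, map_add, map_smul, e0] at hc
      exact hc
    have e2 : lf ν = l' := aux_inj (adjoint T) hTsx h1' (by rw [leq ν h1', e1])
    rw [e2]; exact ⟨hl'K, hl'⟩
  have F2 : ∀ n, ds n ∈ K := by
    have hv := aux_coeffs (fun n => R (ds n)) (‖R‖ * (‖adjoint T b‖ + ‖adjoint T a‖))
      (fun n => by
        calc ‖R (ds n)‖ ≤ ‖R‖ * ‖ds n‖ := R.le_opNorm _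
          _ ≤ _ := mul_le_mul_of_nonneg_left (dsbound n) (norm_nonneg _))
      (fun ν hν0 hν2 => by
        have hν : ‖ν‖ < 1 := by linarith
        have e : R (lf ν) = ∑' n, ν ^ n • R (ds n) := by
          rw [hlfdef]
          rw [R.map_tsum (aux_summable ds _ dsbound hν)]
          exact tsum_congr fun n => map_smul R _ _
        rw [← e]
        exact (memKR _).mp (lsolve ν hν0 hν).1)
    intro n
    rw [memKR]
    exact hv n
  -- the coefficient identities from the exact equation
  let hh : ℕ → H := fun n => Nat.rec b (fun m _ => ds m + if m = 0 then a else 0) n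
  have hh0 : hh 0 = b := rfl
  have hhsucc : ∀ n, hh (n + 1) = ds n + if n = 0 then a else 0 := fun n => rfl
  set D : ℝ := ‖a‖ + ‖b‖ + ‖adjoint T a‖ + ‖adjoint T b‖ with hD
  have hD0 : 0 ≤ ‖a‖ := norm_nonneg a
  have hD1 : 0 ≤ ‖b‖ := norm_nonneg b
  have hD2 : 0 ≤ ‖adjoint T a‖ := norm_nonneg _
  have hD3 : 0 ≤ ‖adjoint T b‖ := norm_nonneg _
  have dsboundD : ∀ n, ‖ds n‖ ≤ D := fun n => by
    have := dsbound n; rw [hD]; linarith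
  have hhbound : ∀ n, ‖hh n‖ ≤ D := by
    intro n
    cases n with
    | zero => rw [hh0, hD]; linarith
    | succ m =>
      rw [hhsucc]
      have h2' : ‖if m = 0 then a else (0:H)‖ ≤ ‖a‖ := by
        split
        · exact le_rfl
        · simpa using hD0
      calc ‖ds m + if m = 0 then a else 0‖ ≤ ‖ds m‖ + ‖if m = 0 then a else (0:H)‖ :=
            norm_add_le _ _
        _ ≤ D := by have := dsbound m; rw [hD]; linarith
  have F3 : ∀ n, T (ds n) = hh n := by
    have hTds : ∀ n, ‖T (ds n)‖ ≤ D := fun n => le_trans (hTx _) (dsboundD n)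
    have hv := aux_coeffs (fun n => T (ds n) - hh n) (2 * D)
      (fun n => by
        calc ‖T (ds n) - hh n‖ ≤ ‖T (ds n)‖ + ‖hh n‖ := norm_sub_le _ _
          _ ≤ 2 * D := by have := hTds n; have := hhbound n; linarith)
      (fun ν hν0 hν2 => by
        have hν : ‖ν‖ < 1 := by linarith
        have hsum1 : Summable (fun n => ν ^ n • T (ds n)) := aux_summable _ D hTds hν
        have hsum2 : Summable (fun n => ν ^ n • hh n) := aux_summable _ D hhbound hν
        have e1 : ∑' n, ν ^ n • (T (ds n) - hh n)
            = (∑' n, ν ^ n • T (ds n)) - ∑' n, ν ^ n • hh n := by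
          rw [← Summable.tsum_sub hsum1 hsum2]
          exact tsum_congr fun n => smul_sub _ _ _
        have e2 : ∑' n, ν ^ n • T (ds n) = T (lf ν) := by
          rw [hlfdef, T.map_tsum (aux_summable ds _ dsbound hν)]
          exact (tsum_congr fun n => map_smul T _ _).symm
        have e3 : ∑' n, ν ^ n • hh n = b + ν • (lf ν + a) := by
          rw [aux_shift hh D hhbound hν, hh0]
          congr 1
          have e4 : ∀ n : ℕ, ν ^ n • hh (n + 1)
              = ν ^ n • ds n + ν ^ n • (if n = 0 then a else 0) := by
            intro n; rw [hhsucc, smul_add]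
          rw [tsum_congr e4, Summable.tsum_add (aux_summable ds _ dsbound hν)
            (aux_summable _ ‖a‖ (fun n => by
              split
              · exact le_rfl
              · simpa using hD0) hν), aux_single]
        have e5 := (lsolve ν hν0 hν).2
        rw [e1, e2, e3]
        linear_combination (norm := module) e5)
    intro n
    have := hv n
    exact sub_eq_zero.mp this
  -- algebraic consequences
  have haK : a ∈ K := by have := F1 0; rwa [cs0] at this
  have hTsbK : adjoint T b ∈ K := by have := F2 0; rwa [ds0] at this
  have hab' : a = adjoint T b := by
    have hx : a - adjoint T b ∈ K := K.sub_mem haK hTsbK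
    exact sub_eq_zero.mp (inner_self_eq_zero.mp (hab _ hx))
  have hTb : T (adjoint T b) = b := by have := F3 0; rwa [ds0, hh0] at this
  have hTa : T a = b := by rw [hab']; exact hTb
  have haKs : T (adjoint T a) = a := by
    have h3 := F3 1
    have hds1 : ds 1 = adjoint T (adjoint T b) + adjoint T a := rfl
    have hhh1 : hh 1 = adjoint T b + a := rfl
    rw [hds1, hhh1] at h3
    rw [← hab', map_add] at h3
    have h4 : (2 : ℂ) • T (adjoint T a) = (2 : ℂ) • a := by
      rw [two_smul, two_smul]; exact h3
    exact smul_right_injective H (by norm_num : (2:ℂ) ≠ 0) h4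
  -- the doubled sequences
  let gs : ℕ → H := fun n => Nat.rec a (fun _ gm => adjoint T gm) n
  have gs0 : gs 0 = a := rfl
  have gssucc : ∀ n, gs (n + 1) = adjoint T (gs n) := fun n => rfl
  have hds2 : ∀ n, ds (n + 1) = gs (n + 1) + gs (n + 1) := by
    intro n
    induction n with
    | zero =>
      rw [dssucc 0, ds0, if_pos rfl, gssucc 0, gs0, ← hab']
    | succ m ih =>
      rw [dssucc (m + 1), if_neg (Nat.succ_ne_zero m), add_zero, ih, map_add,
        gssucc (m + 1)]
  have gsK : ∀ n, gs n ∈ K := by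
    intro n
    cases n with
    | zero => exact haK
    | succ m =>
      have hd := F2 (m + 1)
      rw [hds2 m] at hd
      have he : gs (m + 1) = (2 : ℂ)⁻¹ • (gs (m + 1) + gs (m + 1)) := by
        rw [← two_smul ℂ, smul_smul]
        norm_num
      rw [he]
      exact K.smul_mem _ hd
  have hTgs : ∀ n, T (gs (n + 1)) = gs n := by
    intro n
    cases n with
    | zero => rw [gssucc 0, gs0]; exact haKs
    | succ m =>
      have h5 := F3 (m + 1 + 1)
      rw [dssucc (m + 1), if_neg (Nat.succ_ne_zero m), add_zero,
        hhsucc (m + 1), if_neg (Nat.succ_ne_zero m), add_zero] at h5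
      rw [hds2 m, map_add, map_add] at h5
      have h6 : (2 : ℂ) • T (adjoint T (gs (m + 1))) = (2 : ℂ) • gs (m + 1) := by
        rw [two_smul, two_smul]; exact h5
      have h7 := smul_right_injective H (by norm_num : (2:ℂ) ≠ 0) h6
      rw [gssucc (m + 1)]
      exact h7
  let fs : ℕ → H := fun n => Nat.rec a (fun _ fm => T fm) n
  have fs0 : fs 0 = a := rfl
  have fssucc : ∀ n, fs (n + 1) = T (fs n) := fun n => rfl
  have hcs2 : ∀ n, cs (n + 1) = fs (n + 1) + fs (n + 1) := by
    intro n
    induction n with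
    | zero =>
      rw [cssucc 0, cs0, if_pos rfl, fssucc 0, fs0, hTa]
    | succ m ih =>
      rw [cssucc (m + 1), if_neg (Nat.succ_ne_zero m), add_zero, ih, map_add,
        fssucc (m + 1)]
  have fsK : ∀ n, fs n ∈ K := by
    intro n
    cases n with
    | zero => exact haK
    | succ m =>
      have hd := F1 (m + 1)
      rw [hcs2 m] at hd
      have he : fs (m + 1) = (2 : ℂ)⁻¹ • (fs (m + 1) + fs (m + 1)) := by
        rw [← two_smul ℂ, smul_smul]
        norm_num
      rw [he]
      exact K.smul_mem _ hd
  -- the unitary subspace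
  set G : Set H := Set.range fs ∪ Set.range gs with hGdef
  have hGK : G ⊆ (K : Set H) := by
    rintro x (⟨n, rfl⟩ | ⟨n, rfl⟩)
    exacts [fsK n, gsK n]
  set 𝒢 : Submodule ℂ H := (Submodule.span ℂ G).topologicalClosure with h𝒢def
  have h𝒢closed : IsClosed (𝒢 : Set H) := Submodule.isClosed_topologicalClosure _
  have h𝒢K : 𝒢 ≤ K := Submodule.topologicalClosure_minimal _ (Submodule.span_le.mpr hGK) hKclosed
  have hTG : ⇑T '' G = G := by
    apply Set.Subset.antisymm
    · rintro y ⟨x, hx, rfl⟩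
      rcases hx with ⟨n, rfl⟩ | ⟨n, rfl⟩
      · exact Set.mem_union_left _ ⟨n + 1, (fssucc n).symm⟩
      · cases n with
        | zero =>
          exact Set.mem_union_left _ ⟨1, rfl⟩
        | succ m => exact Set.mem_union_right _ ⟨m, (hTgs m).symm⟩
    · rintro y (⟨n, rfl⟩ | ⟨n, rfl⟩)
      · cases n with
        | zero =>
          refine ⟨gs (0 + 1), Set.mem_union_right _ ⟨1, rfl⟩, ?_⟩
          rw [hTgs 0]
          rfl
        | succ m => exact ⟨fs m, Set.mem_union_left _ ⟨m, rfl⟩, (fssucc m).symm⟩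
      · exact ⟨gs (n + 1), Set.mem_union_right _ ⟨n + 1, rfl⟩, hTgs n⟩
  have hmapspan : ⇑T '' ((Submodule.span ℂ G : Submodule ℂ H) : Set H)
      = ((Submodule.span ℂ G : Submodule ℂ H) : Set H) := by
    rw [← ContinuousLinearMap.coe_coe T, ← Submodule.map_coe, Submodule.map_span, ContinuousLinearMap.coe_coe, hTG]
  have h𝒢coe : (𝒢 : Set H) = closure ((Submodule.span ℂ G : Submodule ℂ H) : Set H) :=
    Submodule.topologicalClosure_coe _
  have hTinv : ∀ v ∈ 𝒢, T v ∈ 𝒢 := by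
    intro v hv
    have hv' : v ∈ closure ((Submodule.span ℂ G : Submodule ℂ H) : Set H) := by
      rw [← h𝒢coe]; exact hv
    have h8 : T v ∈ closure (⇑T '' ((Submodule.span ℂ G : Submodule ℂ H) : Set H)) :=
      image_closure_subset_closure_image T.continuous ⟨v, hv', rfl⟩
    rw [hmapspan] at h8
    rw [← SetLike.mem_coe, h𝒢coe]
    exact h8
  have hnorm𝒢 : ∀ v ∈ 𝒢, ‖T v‖ = ‖v‖ := fun v hv => normK v (h𝒢K hv)
  have himg : ⇑T '' (𝒢 : Set H) = (𝒢 : Set H) := by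
    apply Set.Subset.antisymm
    · rintro y ⟨v, hv, rfl⟩
      exact hTinv v hv
    · intro u hu
      have hu1 : u ∈ closure (⇑T '' ((Submodule.span ℂ G : Submodule ℂ H) : Set H)) := by
        rw [hmapspan, ← h𝒢coe]
        exact hu
      have hu2 : u ∈ closure (⇑T '' (𝒢 : Set H)) := by
        refine closure_mono (Set.image_mono ?_) hu1
        intro z hz
        rw [h𝒢coe]
        exact subset_closure hz
      obtain ⟨k, hk𝒢, hk⟩ := aux_lift 𝒢 h𝒢closed T 1 one_pos
        (fun x hx => le_of_eq (by rw [one_mul, hnorm𝒢 x hx])) u hu2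
      exact ⟨k, hk𝒢, hk⟩
  have hbot := hcnu 𝒢 h𝒢closed hTinv hnorm𝒢 himg
  have ha0 : a = 0 := by
    have h9 : a ∈ 𝒢 := by
      apply Submodule.le_topologicalClosure
      exact Submodule.subset_span (Set.mem_union_left _ ⟨0, fs0⟩)
    rwa [hbot, Submodule.mem_bot] at h9
  exact ⟨ha0, by rw [← hTa, ha0, map_zero]⟩

/-- Let `T` be a completely non-unitary contraction on `H`,
`K = ker(Id − T*T)`, `A_T = {(x,Tx) : x ∈ K}`, and for `λ ∈ ℂ` let
`N_λ = W_λ ∩ A_T^⊥s` where `W_λ = {(x, λx)}` and `A_T^⊥s` is the symplectic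
orthogonal of `A_T` (standard symplectic form, inner products linear in the
first variable). Then the closed linear span of `⋃_{|λ| < 1 or |λ| > 1} N_λ`
equals `A_T^⊥s`. -/
theorem weyl_fibers_span_dense
    {H : Type*} [NormedAddCommGroup H] [InnerProductSpace ℂ H] [CompleteSpace H]
    (T : H →L[ℂ] H) (hT : ‖T‖ ≤ 1)
    (hcnu : ∀ 𝒦 : Submodule ℂ H, IsClosed (𝒦 : Set H) →
      (∀ v ∈ 𝒦, T v ∈ 𝒦) → (∀ v ∈ 𝒦, ‖T v‖ = ‖v‖) →
      T '' (𝒦 : Set H) = (𝒦 : Set H) → 𝒦 = ⊥)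
    (K Ks : Submodule ℂ H)
    (hK : K = LinearMap.ker ((1 - adjoint T ∘L T : H →L[ℂ] H) : H →ₗ[ℂ] H))
    (hKs : Ks = LinearMap.ker ((1 - T ∘L adjoint T : H →L[ℂ] H) : H →ₗ[ℂ] H))
    (ATs : Set (H × H))
    (hATs : ATs = {a : H × H | ∀ b ∈ {p : H × H | ∃ x ∈ K, p = (x, T x)},
      Complex.I * ⟪b.1, a.1⟫_ℂ - Complex.I * ⟪b.2, a.2⟫_ℂ = 0})
    (N : ℂ → Set (H × H))
    (hN : ∀ lam : ℂ, N lam = {p : H × H | ∃ x : H, p = (x, lam • x)} ∩ ATs) :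
    closure (Submodule.span ℂ
        (⋃ lam ∈ {l : ℂ | ‖l‖ < 1 ∨ 1 < ‖l‖}, N lam)
      : Set (H × H)) = ATs := by
  classical
  set S : Set (H × H) := ⋃ lam ∈ {l : ℂ | ‖l‖ < 1 ∨ 1 < ‖l‖}, N lam
    with hSdef
  -- characterization of ATs
  have memATs : ∀ p : H × H, p ∈ ATs ↔ ∀ x ∈ K, ⟪x, p.1 - adjoint T p.2⟫_ℂ = 0 := by
    intro p
    rw [hATs]
    simp only [Set.mem_setOf_eq]
    constructor
    · intro h x hx
      have h2 := h (x, T x) ⟨x, hx, rfl⟩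
      have h4 : Complex.I * (⟪x, p.1⟫_ℂ - ⟪T x, p.2⟫_ℂ) = 0 := by
        linear_combination h2
      rcases mul_eq_zero.mp h4 with h5 | h5
      · exact absurd h5 Complex.I_ne_zero
      · rw [inner_sub_right, adjoint_inner_right]
        exact h5
    · rintro h q ⟨x, hx, rfl⟩
      have h3 := h x hx
      rw [inner_sub_right, adjoint_inner_right] at h3
      simp only
      linear_combination Complex.I * h3
  have memS : ∀ q : H × H, q ∈ S ↔ ∃ lam : ℂ,
      (‖lam‖ < 1 ∨ 1 < ‖lam‖) ∧ q ∈ N lam := by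
    intro q
    rw [hSdef]
    simp only [Set.mem_iUnion, Set.mem_setOf_eq, exists_prop]
  have hSATs : S ⊆ ATs := by
    intro q hq
    obtain ⟨lam, _, hq2⟩ := (memS q).mp hq
    rw [hN lam] at hq2
    exact hq2.2
  -- move to the Hilbert space structure on the product
  set e : WithLp 2 (H × H) ≃L[ℂ] H × H := WithLp.prodContinuousLinearEquiv 2 ℂ H H with hedef
  set ATs' : Set (WithLp 2 (H × H)) := ⇑e ⁻¹' ATs with hATs'def
  set S' : Set (WithLp 2 (H × H)) := ⇑e ⁻¹' S with hS'def
  have heS : ⇑e '' S' = S := Set.image_preimage_eq S e.surjective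
  have memATs'' : ∀ p : WithLp 2 (H × H), p ∈ ATs' ↔
      ∀ x ∈ K, ⟪x, (e p).1 - adjoint T (e p).2⟫_ℂ = 0 := fun p => memATs (e p)
  -- ATs' as a closed submodule
  set Ψ : WithLp 2 (H × H) →L[ℂ] H :=
    (ContinuousLinearMap.fst ℂ H H - adjoint T ∘L ContinuousLinearMap.snd ℂ H H) ∘L
      (e : WithLp 2 (H × H) →L[ℂ] H × H) with hΨdef
  have hΨapp : ∀ p, Ψ p = (e p).1 - adjoint T (e p).2 := fun p => rfl
  set AT : Submodule ℂ (WithLp 2 (H × H)) := Submodule.comap (Ψ : WithLp 2 (H × H) →ₗ[ℂ] H) Kᗮ with hATdef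
  have hATcoe : (AT : Set (WithLp 2 (H × H))) = ATs' := by
    ext p
    rw [SetLike.mem_coe, hATdef, Submodule.mem_comap, Submodule.mem_orthogonal, memATs'' p]
    constructor
    · intro h x hx; rw [← hΨapp]; exact h x hx
    · intro h x hx; rw [ContinuousLinearMap.coe_coe, hΨapp]; exact h x hx
  have hATclosed : IsClosed (AT : Set (WithLp 2 (H × H))) := by
    have : (AT : Set (WithLp 2 (H × H))) = ⇑Ψ ⁻¹' (Kᗮ : Set H) := rfl
    rw [this]
    exact (Submodule.isClosed_orthogonal K).preimage Ψ.continuous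
  -- the closed span
  set M : Submodule ℂ (WithLp 2 (H × H)) := (Submodule.span ℂ S').topologicalClosure with hMdef
  have hMAT : M ≤ AT := by
    apply Submodule.topologicalClosure_minimal
    · rw [Submodule.span_le, hATcoe]
      intro q hq
      exact hSATs hq
    · exact hATclosed
  -- main step : ATs' ⊆ M
  have hsub : ATs' ⊆ (M : Set (WithLp 2 (H × H))) := by
    intro u hu
    haveI : CompleteSpace M :=
      (Submodule.isClosed_topologicalClosure _).completeSpace_coe
    set w : WithLp 2 (H × H) := u - (M.orthogonalProjectionOnto u : WithLp 2 (H × H)) with hwdef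
    have hwperp : ∀ q ∈ M, ⟪q, w⟫_ℂ = 0 := by
      intro q hq
      exact (Submodule.mem_orthogonal M w).mp (Submodule.sub_starProjection_mem_orthogonal (K := M) u) q hq
    have hwATs : w ∈ ATs' := by
      rw [← hATcoe, SetLike.mem_coe]
      apply AT.sub_mem
      · rw [← SetLike.mem_coe, hATcoe]; exact hu
      · exact hMAT (M.orthogonalProjectionOnto u).2
    set a : H := (e w).1 with hadef
    set b : H := (e w).2 with hbdef
    have hab : ∀ x ∈ K, ⟪x, a - adjoint T b⟫_ℂ = 0 := (memATs'' w).mp hwATs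
    have hmain : ∀ μ : ℂ, ‖μ‖ < 1 ∨ 1 < ‖μ‖ →
        a + μ • b ∈ (Submodule.map (((1 : H →L[ℂ] H) - μ • T : H →L[ℂ] H) : H →ₗ[ℂ] H) K).topologicalClosure := by
      intro μ hμ
      rw [← Submodule.orthogonal_orthogonal_eq_closure]
      rw [Submodule.mem_orthogonal]
      intro x hx
      -- x is orthogonal to (1 - μ T) K
      have hxcond : ∀ k ∈ K, ⟪k - μ • T k, x⟫_ℂ = 0 := by
        intro k hk
        apply (Submodule.mem_orthogonal _ x).mp hx
        refine ⟨k, hk, ?_⟩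
        simp only [ContinuousLinearMap.coe_sub', Pi.sub_apply, ContinuousLinearMap.one_apply,
          ContinuousLinearMap.smul_apply, ContinuousLinearMap.coe_coe]
      set lam : ℂ := (starRingEnd ℂ) μ with hlamdef
      have hlamabs : ‖lam‖ < 1 ∨ 1 < ‖lam‖ := by
        rw [hlamdef, Complex.norm_conj]
        exact hμ
      -- the pair (x, lam • x) lies in N lam
      set q : WithLp 2 (H × H) := e.symm (x, lam • x) with hqdef
      have heq : e q = (x, lam • x) := e.apply_symm_apply _
      have hqATs : e q ∈ ATs := by
        rw [memATs, heq]
        intro k hk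
        have h6 := hxcond k hk
        rw [inner_sub_left, inner_smul_left] at h6
        rw [inner_sub_right]
        simp only
        rw [map_smul, inner_smul_right, adjoint_inner_right, hlamdef]
        exact h6
      have hqN : e q ∈ N lam := by
        rw [hN lam]
        exact ⟨⟨x, by rw [heq]⟩, hqATs⟩
      have hqS' : q ∈ S' := by
        rw [hS'def]
        simp only [Set.mem_preimage]
        rw [memS]
        exact ⟨lam, hlamabs, hqN⟩
      have hqM : q ∈ M :=
        Submodule.le_topologicalClosure _ (Submodule.subset_span hqS')
      have h7 := hwperp q hqM
      rw [WithLp.prod_inner_apply] at h7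
      have hqfst : (WithLp.ofLp q).fst = x := rfl
      have hqsnd : (WithLp.ofLp q).snd = lam • x := rfl
      have hwfst : (WithLp.ofLp w).fst = a := rfl
      have hwsnd : (WithLp.ofLp w).snd = b := rfl
      rw [hqfst, hqsnd, hwfst, hwsnd, inner_smul_left, hlamdef, Complex.conj_conj] at h7
      rw [inner_add_right, inner_smul_right]
      exact h7
    have hzero := core_cnu T hT hcnu K hK a b hab hmain
    have hw0 : w = 0 := by
      have he0 : e w = 0 := by
        have h9 : e w = (a, b) := rfl
        rw [h9, hzero.1, hzero.2]
        rfl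
      have h10 := congrArg e.symm he0
      rwa [e.symm_apply_apply, map_zero] at h10
    have hu' : u = (M.orthogonalProjectionOnto u : WithLp 2 (H × H)) := by
      rw [hwdef] at hw0
      exact sub_eq_zero.mp hw0
    rw [hu']
    exact (M.orthogonalProjectionOnto u).2
  -- conclude
  have hMcoe : (M : Set (WithLp 2 (H × H))) = ATs' := by
    apply Set.Subset.antisymm
    · intro q hq
      rw [← hATcoe]
      exact hMAT hq
    · exact hsub
  have himg : ⇑e '' ((Submodule.span ℂ S' : Submodule ℂ (WithLp 2 (H × H))) :
        Set (WithLp 2 (H × H)))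
      = ((Submodule.span ℂ S : Submodule ℂ (H × H)) : Set (H × H)) := by
    have h := congrArg (fun P : Submodule ℂ (H × H) => (P : Set (H × H)))
      (Submodule.map_span (e : WithLp 2 (H × H) →ₗ[ℂ] H × H) S')
    simp only [Submodule.map_coe] at h
    rw [← heS]
    exact h
  calc closure ((Submodule.span ℂ S : Submodule ℂ (H × H)) : Set (H × H))
      = closure (⇑e '' ((Submodule.span ℂ S' : Submodule ℂ (WithLp 2 (H × H))) :
          Set (WithLp 2 (H × H)))) := by rw [himg]
    _ = ⇑e '' closure ((Submodule.span ℂ S' : Submodule ℂ (WithLp 2 (H × H))) :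
          Set (WithLp 2 (H × H))) := by
        rw [← ContinuousLinearEquiv.coe_toHomeomorph e]
        exact (Homeomorph.image_closure _ _).symm
    _ = ⇑e '' (M : Set (WithLp 2 (H × H))) := by rw [← Submodule.topologicalClosure_coe]
    _ = ⇑e '' ATs' := by rw [hMcoe]
    _ = ATs := Set.image_preimage_eq ATs e.surjective
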